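/- Under the hypotheses of the previous statement, suppose additionally |X| < m/(36·log m) with m ≥ 2, and let C, C̃, U be unitary operators on (ℂ^X)^{⊗m} such that C and C̃ agree on the subspace spanned by basis vectors indexed by tuples in Υ_β(m,X), and U·C maps the span H of {|ψ^b⟩} into itself, with the initial state |Φ_0⟩ (uniform superposition over X^m) lying in H. Then for all k ≥ 0, ‖(U·C)^k|Φ_0⟩ − (U·C̃)^k|Φ_0⟩‖ ≤ 2k·√|X|·exp(−m/(9|X|)) ≤ 2k/m^3. -/

import Mathlib

open scoped BigOperators Classical

/-- `Aset A1 true = A1` (the set `A¹`) and `Aset A1 false = A1ᶜ` (the set `A⁰`). -/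
def Aset {X : Type*} [Fintype X] [DecidableEq X] (A1 : Finset X) : Bool → Finset X
  | true => A1
  | false => A1ᶜ

/-- The state `|ψ^b⟩ = ⊗ᵢ |ψᵢ^{bᵢ}⟩`, written in coordinates. -/
noncomputable def psiState {X : Type*} [Fintype X] [DecidableEq X] {m : ℕ}
    (A1 : Fin m → Finset X) (b : Fin m → Bool) : EuclideanSpace ℂ (Fin m → X) :=
  WithLp.toLp 2 (fun x => ∏ i, if x i ∈ Aset (A1 i) (b i)
    then (((Real.sqrt ((Aset (A1 i) (b i)).card))⁻¹ : ℝ) : ℂ) else 0)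

/-- `Υ_γ(m, X)`: tuples in `X^m` in which every element of `X` appears at most `γ` times. -/
def Upsilon (m : ℕ) (X : Type*) [Fintype X] [DecidableEq X] (γ : ℝ) : Set (Fin m → X) :=
  {x | ∀ a : X, ((Finset.univ.filter fun i => x i = a).card : ℝ) ≤ γ}

/-- The uniform superposition `|Φ₀⟩` over all of `X^m`. -/
noncomputable def Phi0 (X : Type*) [Fintype X] (m : ℕ) : EuclideanSpace ℂ (Fin m → X) :=
  WithLp.toLp 2 (fun _ => (((Real.sqrt ((Fintype.card X : ℝ) ^ m))⁻¹ : ℝ) : ℂ))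

section Aux
variable {X : Type*} [Fintype X] [DecidableEq X] {m : ℕ}

noncomputable def wgt (A1 : Fin m → Finset X) (b : Fin m → Bool) (x : Fin m → X) : ℝ :=
  ∏ i, if x i ∈ Aset (A1 i) (b i) then ((Aset (A1 i) (b i)).card : ℝ)⁻¹ else 0

lemma mem_Aset_iff (A : Finset X) (c : Bool) (v : X) : v ∈ Aset A c ↔ c = decide (v ∈ A) := by
  cases c <;> simp [Aset]

lemma card_Aset_pos {A : Finset X} (hne : A.Nonempty) (hhalf : 2 * A.card ≤ Fintype.card X)
    (c : Bool) : 0 < (Aset A c).card := by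
  cases c
  · have := Finset.card_compl A
    have h1 : 1 ≤ A.card := Finset.card_pos.2 hne
    simp only [Aset, this]
    omega
  · exact Finset.card_pos.2 hne

lemma wgt_nonneg (A1 : Fin m → Finset X) (b : Fin m → Bool) (x : Fin m → X) :
    0 ≤ wgt A1 b x := by
  apply Finset.prod_nonneg
  intro i _
  split <;> positivity

lemma sum_wgt (A1 : Fin m → Finset X) (hne : ∀ i, (A1 i).Nonempty)
    (hhalf : ∀ i, 2 * (A1 i).card ≤ Fintype.card X) (b : Fin m → Bool) :
    ∑ x : Fin m → X, wgt A1 b x = 1 := by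
  unfold wgt
  have h := Finset.prod_univ_sum (fun _ : Fin m => (Finset.univ : Finset X))
    (fun i v => if v ∈ Aset (A1 i) (b i) then ((Aset (A1 i) (b i)).card : ℝ)⁻¹ else 0)
  rw [Fintype.piFinset_univ] at h
  rw [← h, Finset.prod_eq_one]
  intro i _
  have hc : 0 < ((Aset (A1 i) (b i)).card : ℝ) := by
    exact_mod_cast card_Aset_pos (hne i) (hhalf i) (b i)
  rw [Finset.sum_ite_mem, Finset.univ_inter, Finset.sum_const, nsmul_eq_mul,
    mul_inv_cancel₀ hc.ne']

lemma wgt_eq_zero_of_ne (A1 : Fin m → Finset X) {b : Fin m → Bool} {x : Fin m → X}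
    (h : b ≠ fun i => decide (x i ∈ A1 i)) : wgt A1 b x = 0 := by
  obtain ⟨i, hi⟩ : ∃ i, b i ≠ decide (x i ∈ A1 i) := by
    by_contra hc; push_neg at hc; exact h (funext hc)
  apply Finset.prod_eq_zero (Finset.mem_univ i)
  rw [if_neg]
  rw [mem_Aset_iff]
  exact hi

lemma psiState_eq_zero_of_ne (A1 : Fin m → Finset X) {b : Fin m → Bool} {x : Fin m → X}
    (h : b ≠ fun i => decide (x i ∈ A1 i)) : psiState A1 b x = 0 := by
  obtain ⟨i, hi⟩ : ∃ i, b i ≠ decide (x i ∈ A1 i) := by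
    by_contra hc; push_neg at hc; exact h (funext hc)
  simp only [psiState, PiLp.toLp_apply]
  apply Finset.prod_eq_zero (Finset.mem_univ i)
  rw [if_neg]
  rw [mem_Aset_iff]
  exact hi

lemma norm_sq_psiState (A1 : Fin m → Finset X) (b : Fin m → Bool) (x : Fin m → X) :
    ‖psiState A1 b x‖ ^ 2 = wgt A1 b x := by
  unfold psiState wgt
  simp only [PiLp.toLp_apply]
  have h : ∀ i : Fin m, (if x i ∈ Aset (A1 i) (b i)
      then (((Real.sqrt ((Aset (A1 i) (b i)).card))⁻¹ : ℝ) : ℂ) else 0)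
      = (((if x i ∈ Aset (A1 i) (b i) then (Real.sqrt ((Aset (A1 i) (b i)).card))⁻¹ else 0 : ℝ)) : ℂ) := by
    intro i; split <;> simp
  rw [Finset.prod_congr rfl (fun i _ => h i), ← Complex.ofReal_prod, Complex.norm_real, Real.norm_eq_abs,
    sq_abs, ← Finset.prod_pow]
  refine Finset.prod_congr rfl (fun i _ => ?_)
  split
  · rw [inv_pow, Real.sq_sqrt (by positivity)]
  · simp

lemma ite_mul_split {α : Type*} (S : Finset α) (c : ℝ) (Q : Prop) [Decidable Q] (a v : α)
    [Decidable (v ∈ S)] [Decidable (v = a)] :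
    (if v ∈ S then c else 0) * (if Q ∧ v = a then 2 else 1) =
    (if v ∈ S then c else 0) + (if v = a then (if Q ∧ v ∈ S then c else 0) else 0) := by
  split_ifs <;> simp_all <;> ring

lemma chernoff (A1 : Fin m → Finset X) (hne : ∀ i, (A1 i).Nonempty)
    (hhalf : ∀ i, 2 * (A1 i).card ≤ Fintype.card X) (b : Fin m → Bool) (a : X) (β : ℝ)
    (hβlow : 8 * m / (Fintype.card X : ℝ) < β) (hn : 2 ≤ Fintype.card X) :
    ∑ x : Fin m → X, (if (β / 2 : ℝ) <
        ((Finset.univ.filter fun i => b i = false ∧ x i = a).card : ℝ)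
      then wgt A1 b x else 0) ≤
      Real.exp (-(2 * m) / (9 * Fintype.card X)) := by
  have hn2 : (2 : ℝ) ≤ (Fintype.card X : ℝ) := by exact_mod_cast hn
  have hn0 : (0 : ℝ) < (Fintype.card X : ℝ) := by linarith
  set n : ℝ := (Fintype.card X : ℝ) with hndef
  set T : (Fin m → X) → ℕ := fun x => (Finset.univ.filter fun i => b i = false ∧ x i = a).card
    with hT
  have step1 : ∀ x : Fin m → X, (if (β / 2 : ℝ) < (T x : ℝ) then wgt A1 b x else 0) ≤
      wgt A1 b x * (2 : ℝ) ^ ((T x : ℝ) - β / 2) := by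
    intro x
    split
    · rename_i hx
      have h1 : (1 : ℝ) ≤ (2 : ℝ) ^ ((T x : ℝ) - β / 2) :=
        Real.one_le_rpow one_le_two (by linarith)
      nlinarith [wgt_nonneg A1 b x]
    · exact mul_nonneg (wgt_nonneg A1 b x) (Real.rpow_nonneg (by norm_num) _)
  have step2 : ∀ x : Fin m → X, wgt A1 b x * (2 : ℝ) ^ ((T x : ℝ) - β / 2) =
      (2 : ℝ) ^ (-(β / 2)) * (wgt A1 b x * (2 : ℝ) ^ (T x)) := by
    intro x
    rw [sub_eq_add_neg, Real.rpow_add two_pos, Real.rpow_natCast]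
    ring
  have step4 : ∀ x : Fin m → X, wgt A1 b x * (2 : ℝ) ^ (T x) =
      ∏ i, ((if x i ∈ Aset (A1 i) (b i) then ((Aset (A1 i) (b i)).card : ℝ)⁻¹ else 0) *
        (if b i = false ∧ x i = a then 2 else 1)) := by
    intro x
    rw [Finset.prod_mul_distrib]
    congr 1
    rw [hT]
    rw [← Finset.prod_const (b := (2:ℝ)), Finset.prod_filter]
  have step5 : ∑ x : Fin m → X,
      ∏ i, ((if x i ∈ Aset (A1 i) (b i) then ((Aset (A1 i) (b i)).card : ℝ)⁻¹ else 0) *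
        (if b i = false ∧ x i = a then 2 else 1)) =
      ∏ i, ∑ v : X, ((if v ∈ Aset (A1 i) (b i) then ((Aset (A1 i) (b i)).card : ℝ)⁻¹ else 0) *
        (if b i = false ∧ v = a then 2 else 1)) := by
    have h := Finset.prod_univ_sum (fun _ : Fin m => (Finset.univ : Finset X))
      (fun i v => (if v ∈ Aset (A1 i) (b i) then ((Aset (A1 i) (b i)).card : ℝ)⁻¹ else 0) *
        (if b i = false ∧ v = a then 2 else 1))
    rw [Fintype.piFinset_univ] at h
    rw [h]
  have gnonneg : ∀ (i : Fin m) (v : X),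
      0 ≤ ((if v ∈ Aset (A1 i) (b i) then ((Aset (A1 i) (b i)).card : ℝ)⁻¹ else 0) *
        (if b i = false ∧ v = a then 2 else 1)) := by
    intro i v
    apply mul_nonneg
    · split <;> positivity
    · split <;> norm_num
  have step6 : ∀ i : Fin m, ∑ v : X,
      ((if v ∈ Aset (A1 i) (b i) then ((Aset (A1 i) (b i)).card : ℝ)⁻¹ else 0) *
        (if b i = false ∧ v = a then 2 else 1)) ≤ 1 + 2 / n := by
    intro i
    have hc : 0 < ((Aset (A1 i) (b i)).card : ℝ) := by
      exact_mod_cast card_Aset_pos (hne i) (hhalf i) (b i)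
    have hsplit : ∀ v : X,
        ((if v ∈ Aset (A1 i) (b i) then ((Aset (A1 i) (b i)).card : ℝ)⁻¹ else 0) *
          (if b i = false ∧ v = a then 2 else 1)) =
        (if v ∈ Aset (A1 i) (b i) then ((Aset (A1 i) (b i)).card : ℝ)⁻¹ else 0) +
        (if v = a then (if b i = false ∧ v ∈ Aset (A1 i) (b i)
          then ((Aset (A1 i) (b i)).card : ℝ)⁻¹ else 0) else 0) := by
      intro v
      exact ite_mul_split _ _ _ a v
    rw [Finset.sum_congr rfl (fun v _ => hsplit v), Finset.sum_add_distrib]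
    have h1 : ∑ v : X, (if v ∈ Aset (A1 i) (b i) then ((Aset (A1 i) (b i)).card : ℝ)⁻¹ else 0)
        = 1 := by
      rw [Finset.sum_ite_mem, Finset.univ_inter, Finset.sum_const, nsmul_eq_mul,
        mul_inv_cancel₀ hc.ne']
    have h2 : ∑ v : X, (if v = a then (if b i = false ∧ v ∈ Aset (A1 i) (b i)
        then ((Aset (A1 i) (b i)).card : ℝ)⁻¹ else 0) else 0) ≤ 2 / n := by
      rw [Finset.sum_ite_eq' Finset.univ a (fun v => if b i = false ∧ v ∈ Aset (A1 i) (b i)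
        then ((Aset (A1 i) (b i)).card : ℝ)⁻¹ else 0)]
      simp only [Finset.mem_univ, if_true]
      split
      · rename_i hcond
        have hbf : b i = false := hcond.1
        have hA : ((A1 i).card : ℝ) ≤ n := by
          rw [hndef]; exact_mod_cast Finset.card_le_card (Finset.subset_univ _) |>.trans
            (le_of_eq (Finset.card_univ))
        have hA2 : ((A1 i).card : ℝ) * 2 ≤ n := by
          have h := Nat.cast_le (α := ℝ) |>.2 (hhalf i)
          push_cast at h
          rw [hndef]
          linarith
        have hcard : n / 2 ≤ ((Aset (A1 i) (b i)).card : ℝ) := by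
          rw [hbf]
          have h4 : (A1 i)ᶜ.card = Fintype.card X - (A1 i).card := Finset.card_compl _
          have h5 : (A1 i).card ≤ Fintype.card X := by have := hhalf i; omega
          have h6 : (((A1 i)ᶜ.card : ℕ) : ℝ) = n - ((A1 i).card : ℝ) := by
            rw [h4, Nat.cast_sub h5, hndef]
          simp only [Aset]
          rw [h6]
          linarith
        rw [← inv_div n 2]
        exact inv_anti₀ (by linarith) hcard
      · exact div_nonneg (by norm_num) hn0.le
    rw [h1]
    linarith
  have sum_g_nonneg : ∀ i : Fin m, 0 ≤ ∑ v : X,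
      ((if v ∈ Aset (A1 i) (b i) then ((Aset (A1 i) (b i)).card : ℝ)⁻¹ else 0) *
        (if b i = false ∧ v = a then 2 else 1)) :=
    fun i => Finset.sum_nonneg fun v _ => gnonneg i v
  have step7 : ∏ i : Fin m, ∑ v : X,
      ((if v ∈ Aset (A1 i) (b i) then ((Aset (A1 i) (b i)).card : ℝ)⁻¹ else 0) *
        (if b i = false ∧ v = a then 2 else 1)) ≤ (1 + 2 / n) ^ m := by
    calc ∏ i : Fin m, ∑ v : X, _ ≤ ∏ i : Fin m, (1 + 2 / n) :=
          Finset.prod_le_prod (fun i _ => sum_g_nonneg i) (fun i _ => step6 i)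
      _ = (1 + 2 / n) ^ m := by rw [Finset.prod_const, Finset.card_univ, Fintype.card_fin]
  have step8 : (1 + 2 / n) ^ m ≤ Real.exp (2 * m / n) := by
    have h1 : (1 : ℝ) + 2 / n ≤ Real.exp (2 / n) := by
      have := Real.add_one_le_exp (2 / n); linarith
    calc (1 + 2 / n) ^ m ≤ (Real.exp (2 / n)) ^ m :=
          pow_le_pow_left₀ (by positivity) h1 m
      _ = Real.exp (m * (2 / n)) := (Real.exp_nat_mul _ m).symm
      _ = Real.exp (2 * m / n) := by rw [mul_div_assoc']; ring_nf
  have step9 : (2 : ℝ) ^ (-(β / 2)) * Real.exp (2 * m / n) ≤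
      Real.exp (-(2 * m) / (9 * n)) := by
    rw [Real.rpow_def_of_pos two_pos, ← Real.exp_add, Real.exp_le_exp]
    have hL : (0.6931471803 : ℝ) < Real.log 2 := Real.log_two_gt_d9
    have hq : (0 : ℝ) ≤ (m : ℝ) / n := by positivity
    have hint1 : Real.log 2 * (8 * m / n) ≤ Real.log 2 * β :=
      mul_le_mul_of_nonneg_left hβlow.le (by linarith)
    have hint2 : (0.6931471803 : ℝ) * ((m : ℝ) / n) ≤ Real.log 2 * ((m : ℝ) / n) :=
      mul_le_mul_of_nonneg_right hL.le hq
    have e1 : 8 * (m : ℝ) / n = 8 * ((m : ℝ) / n) := by ring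
    have e2 : (2 : ℝ) * m / n = 2 * ((m : ℝ) / n) := by ring
    have e3 : -(2 * (m : ℝ)) / (9 * n) = -(2 / 9) * ((m : ℝ) / n) := by ring
    rw [e2, e3]
    rw [e1] at hint1
    nlinarith [hint1, hint2, hq]
  calc ∑ x : Fin m → X, (if (β / 2 : ℝ) < (T x : ℝ) then wgt A1 b x else 0)
      ≤ ∑ x : Fin m → X, wgt A1 b x * (2 : ℝ) ^ ((T x : ℝ) - β / 2) :=
        Finset.sum_le_sum (fun x _ => step1 x)
    _ = (2 : ℝ) ^ (-(β / 2)) * ∑ x : Fin m → X, wgt A1 b x * (2 : ℝ) ^ (T x) := by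
        rw [Finset.mul_sum]; exact Finset.sum_congr rfl (fun x _ => step2 x)
    _ = (2 : ℝ) ^ (-(β / 2)) * ∏ i, ∑ v : X,
          ((if v ∈ Aset (A1 i) (b i) then ((Aset (A1 i) (b i)).card : ℝ)⁻¹ else 0) *
            (if b i = false ∧ v = a then 2 else 1)) := by
        rw [Finset.sum_congr rfl (fun x _ => step4 x), step5]
    _ ≤ (2 : ℝ) ^ (-(β / 2)) * (1 + 2 / n) ^ m :=
        mul_le_mul_of_nonneg_left step7 (Real.rpow_nonneg (by norm_num) _)
    _ ≤ (2 : ℝ) ^ (-(β / 2)) * Real.exp (2 * m / n) :=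
        mul_le_mul_of_nonneg_left step8 (Real.rpow_nonneg (by norm_num) _)
    _ ≤ Real.exp (-(2 * m) / (9 * n)) := step9

lemma tail_bound (A1 : Fin m → Finset X) (hne : ∀ i, (A1 i).Nonempty)
    (hhalf : ∀ i, 2 * (A1 i).card ≤ Fintype.card X) (b : Fin m → Bool) (β : ℝ)
    (hβlow : 8 * m / (Fintype.card X : ℝ) < β) (hn : 2 ≤ Fintype.card X)
    (hsub : ∀ x : Fin m → X, (∀ i, x i ∈ A1 i) → x ∈ Upsilon m X (β / 2)) :
    ∑ x : Fin m → X, (if x ∉ Upsilon m X β then wgt A1 b x else 0) ≤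
      (Fintype.card X : ℝ) * Real.exp (-(2 * m) / (9 * Fintype.card X)) := by
  have pointwise : ∀ x : Fin m → X, (if x ∉ Upsilon m X β then wgt A1 b x else 0) ≤
      ∑ a : X, (if (β / 2 : ℝ) <
        ((Finset.univ.filter fun i => b i = false ∧ x i = a).card : ℝ)
        then wgt A1 b x else 0) := by
    intro x
    have hterm_nonneg : ∀ a : X, (0:ℝ) ≤ (if (β / 2 : ℝ) <
        ((Finset.univ.filter fun i => b i = false ∧ x i = a).card : ℝ)
        then wgt A1 b x else 0) := by
      intro a; split
      · exact wgt_nonneg A1 b x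
      · exact le_rfl
    by_cases hU : x ∈ Upsilon m X β
    · rw [if_neg (by simpa using hU)]
      exact Finset.sum_nonneg fun a _ => hterm_nonneg a
    · rw [if_pos hU]
      by_cases hw : wgt A1 b x = 0
      · rw [hw]
        exact Finset.sum_nonneg fun a _ => by split <;> exact le_rfl
      -- x is in the support of ψ^b
      have hmem : ∀ i, x i ∈ Aset (A1 i) (b i) := by
        intro i
        by_contra hni
        exact hw (Finset.prod_eq_zero (Finset.mem_univ i) (if_neg hni))
      obtain ⟨a, ha⟩ : ∃ a : X, β <
          ((Finset.univ.filter fun i => x i = a).card : ℝ) := by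
        rw [Upsilon, Set.mem_setOf_eq] at hU
        push_neg at hU
        obtain ⟨a, ha⟩ := hU
        exact ⟨a, ha⟩
      -- split count by b i
      have hsplitcount :
          ((Finset.univ.filter fun i => x i = a).filter fun i => b i = false).card +
          ((Finset.univ.filter fun i => x i = a).filter fun i => ¬ (b i = false)).card =
          (Finset.univ.filter fun i => x i = a).card :=
        Finset.card_filter_add_card_filter_not _
      -- bound the true part via hsub
      set y : Fin m → X := fun i => if b i = true then x i else (hne i).choose with hy
      have hyA : ∀ i, y i ∈ A1 i := by
        intro i
        by_cases hb : b i = true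
        · have hx := hmem i
          rw [hb] at hx
          simpa [hy, hb, Aset] using hx
        · simpa [hy, hb] using (hne i).choose_spec
      have hyU := hsub y hyA a
      have htrue_le : (((Finset.univ.filter fun i => x i = a).filter
          fun i => ¬ (b i = false)).card : ℝ) ≤ β / 2 := by
        refine le_trans ?_ hyU
        have hsubset : ((Finset.univ.filter fun i => x i = a).filter fun i => ¬ (b i = false))
            ⊆ Finset.univ.filter fun i => y i = a := by
          intro i hi
          simp only [Finset.mem_filter, Finset.mem_univ, true_and] at hi ⊢
          obtain ⟨hxa, hbt⟩ := hi
          simp only [Bool.not_eq_false] at hbt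
          simpa [hy, hbt] using hxa
        exact_mod_cast Nat.cast_le.2 (Finset.card_le_card hsubset)
      have hfalse : (β / 2 : ℝ) <
          (((Finset.univ.filter fun i => x i = a).filter fun i => b i = false).card : ℝ) := by
        have := hsplitcount
        have hcast : (((Finset.univ.filter fun i => x i = a).filter fun i => b i = false).card : ℝ)
            + (((Finset.univ.filter fun i => x i = a).filter fun i => ¬(b i = false)).card : ℝ)
            = ((Finset.univ.filter fun i => x i = a).card : ℝ) := by exact_mod_cast this
        linarith
      have heq : ((Finset.univ.filter fun i => x i = a).filter fun i => b i = false)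
          = Finset.univ.filter fun i => b i = false ∧ x i = a := by
        rw [Finset.filter_filter]
        apply Finset.filter_congr
        intro i _
        exact and_comm
      rw [heq] at hfalse
      calc wgt A1 b x = (if (β / 2 : ℝ) <
            ((Finset.univ.filter fun i => b i = false ∧ x i = a).card : ℝ)
            then wgt A1 b x else 0) := (if_pos hfalse).symm
        _ ≤ _ := Finset.single_le_sum (fun a' _ => hterm_nonneg a') (Finset.mem_univ a)
  calc ∑ x : Fin m → X, (if x ∉ Upsilon m X β then wgt A1 b x else 0)
      ≤ ∑ x : Fin m → X, ∑ a : X, (if (β / 2 : ℝ) <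
          ((Finset.univ.filter fun i => b i = false ∧ x i = a).card : ℝ)
          then wgt A1 b x else 0) := Finset.sum_le_sum fun x _ => pointwise x
    _ = ∑ a : X, ∑ x : Fin m → X, (if (β / 2 : ℝ) <
          ((Finset.univ.filter fun i => b i = false ∧ x i = a).card : ℝ)
          then wgt A1 b x else 0) := Finset.sum_comm
    _ ≤ ∑ a : X, Real.exp (-(2 * m) / (9 * Fintype.card X)) :=
        Finset.sum_le_sum fun a _ => chernoff A1 hne hhalf b a β hβlow hn
    _ = (Fintype.card X : ℝ) * Real.exp (-(2 * m) / (9 * Fintype.card X)) := by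
        rw [Finset.sum_const, Finset.card_univ, nsmul_eq_mul]

lemma apply_sum_smul {ι : Type*} (s : Finset ι) (f : ι → EuclideanSpace ℂ (Fin m → X))
    (c : ι → ℂ) (x : Fin m → X) : (∑ b ∈ s, c b • f b) x = ∑ b ∈ s, c b * f b x := by
  induction s using Finset.induction with
  | empty => simp
  | insert a s' h ih => rw [Finset.sum_insert h, Finset.sum_insert h, ← ih]; rfl

lemma norm_sq_eq (φ : EuclideanSpace ℂ (Fin m → X)) : ‖φ‖ ^ 2 = ∑ x, ‖φ x‖ ^ 2 := by
  rw [EuclideanSpace.norm_eq, Real.sq_sqrt (Finset.sum_nonneg fun i _ => sq_nonneg _)]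

lemma key_pointwise (A1 : Fin m → Finset X) (c : (Fin m → Bool) → ℂ) (x : Fin m → X) :
    ‖(∑ b : Fin m → Bool, c b • psiState A1 b) x‖ ^ 2 =
      ∑ b : Fin m → Bool, ‖c b‖ ^ 2 * wgt A1 b x := by
  set b0 : Fin m → Bool := fun i => decide (x i ∈ A1 i) with hb0
  rw [apply_sum_smul]
  rw [Finset.sum_eq_single b0
    (fun b _ hb => by rw [psiState_eq_zero_of_ne A1 (hb0 ▸ hb), mul_zero])
    (fun h => absurd (Finset.mem_univ _) h)]
  rw [Finset.sum_eq_single b0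
    (fun b _ hb => by rw [wgt_eq_zero_of_ne A1 (hb0 ▸ hb), mul_zero])
    (fun h => absurd (Finset.mem_univ _) h)]
  rw [norm_mul, mul_pow, norm_sq_psiState]

lemma proj_bound (A1 : Fin m → Finset X) (hne : ∀ i, (A1 i).Nonempty)
    (hhalf : ∀ i, 2 * (A1 i).card ≤ Fintype.card X) (β : ℝ)
    (hβlow : 8 * m / (Fintype.card X : ℝ) < β) (hn : 2 ≤ Fintype.card X)
    (hsub : ∀ x : Fin m → X, (∀ i, x i ∈ A1 i) → x ∈ Upsilon m X (β / 2))
    (φ : EuclideanSpace ℂ (Fin m → X))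
    (hφ : φ ∈ Submodule.span ℂ (Set.range (psiState A1))) :
    ∑ x : Fin m → X, (if x ∉ Upsilon m X β then ‖φ x‖ ^ 2 else 0) ≤
      ((Fintype.card X : ℝ) * Real.exp (-(2 * m) / (9 * Fintype.card X))) * ‖φ‖ ^ 2 := by
  obtain ⟨c, hc⟩ := (Submodule.mem_span_range_iff_exists_fun ℂ).1 hφ
  have key : ∀ x, ‖φ x‖ ^ 2 = ∑ b : Fin m → Bool, ‖c b‖ ^ 2 * wgt A1 b x := by
    intro x
    rw [← hc]
    exact key_pointwise A1 c x
  have hnorm : ‖φ‖ ^ 2 = ∑ b : Fin m → Bool, ‖c b‖ ^ 2 := by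
    rw [norm_sq_eq]
    calc ∑ x, ‖φ x‖ ^ 2 = ∑ x, ∑ b : Fin m → Bool, ‖c b‖ ^ 2 * wgt A1 b x :=
          Finset.sum_congr rfl fun x _ => key x
      _ = ∑ b : Fin m → Bool, ∑ x, ‖c b‖ ^ 2 * wgt A1 b x := Finset.sum_comm
      _ = ∑ b : Fin m → Bool, ‖c b‖ ^ 2 := by
          refine Finset.sum_congr rfl fun b _ => ?_
          rw [← Finset.mul_sum, sum_wgt A1 hne hhalf b, mul_one]
  have e1 : ∀ x, (if x ∉ Upsilon m X β then ‖φ x‖ ^ 2 else 0) =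
      ∑ b : Fin m → Bool, ‖c b‖ ^ 2 * (if x ∉ Upsilon m X β then wgt A1 b x else 0) := by
    intro x
    by_cases hx : x ∈ Upsilon m X β
    · rw [if_neg (not_not_intro hx)]
      symm
      refine Finset.sum_eq_zero fun b _ => ?_
      rw [if_neg (not_not_intro hx), mul_zero]
    · rw [if_pos hx, key x]
      exact Finset.sum_congr rfl fun b _ => by rw [if_pos hx]
  calc ∑ x : Fin m → X, (if x ∉ Upsilon m X β then ‖φ x‖ ^ 2 else 0)
      = ∑ x : Fin m → X, ∑ b : Fin m → Bool,
          ‖c b‖ ^ 2 * (if x ∉ Upsilon m X β then wgt A1 b x else 0) :=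
        Finset.sum_congr rfl fun x _ => e1 x
    _ = ∑ b : Fin m → Bool, ‖c b‖ ^ 2 *
          ∑ x : Fin m → X, (if x ∉ Upsilon m X β then wgt A1 b x else 0) := by
        rw [Finset.sum_comm]
        exact Finset.sum_congr rfl fun b _ => (Finset.mul_sum _ _ _).symm
    _ ≤ ∑ b : Fin m → Bool, ‖c b‖ ^ 2 *
          ((Fintype.card X : ℝ) * Real.exp (-(2 * m) / (9 * Fintype.card X))) := by
        refine Finset.sum_le_sum fun b _ => ?_
        exact mul_le_mul_of_nonneg_left (tail_bound A1 hne hhalf b β hβlow hn hsub)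
          (sq_nonneg _)
    _ = ((Fintype.card X : ℝ) * Real.exp (-(2 * m) / (9 * Fintype.card X))) * ‖φ‖ ^ 2 := by
        rw [← Finset.sum_mul, hnorm]
        ring

lemma diff_bound (A1 : Fin m → Finset X) (hne : ∀ i, (A1 i).Nonempty)
    (hhalf : ∀ i, 2 * (A1 i).card ≤ Fintype.card X) (β : ℝ)
    (hβlow : 8 * m / (Fintype.card X : ℝ) < β) (hn : 2 ≤ Fintype.card X)
    (hsub : ∀ x : Fin m → X, (∀ i, x i ∈ A1 i) → x ∈ Upsilon m X (β / 2))
    (C C' : EuclideanSpace ℂ (Fin m → X) ≃ₗᵢ[ℂ] EuclideanSpace ℂ (Fin m → X))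
    (hagree : ∀ ψ : EuclideanSpace ℂ (Fin m → X),
      (∀ x, x ∉ Upsilon m X β → ψ x = 0) → C ψ = C' ψ)
    (φ : EuclideanSpace ℂ (Fin m → X))
    (hφ : φ ∈ Submodule.span ℂ (Set.range (psiState A1))) :
    ‖C φ - C' φ‖ ≤
      2 * (Real.sqrt (Fintype.card X) * Real.exp (-(m : ℝ) / (9 * Fintype.card X))) * ‖φ‖ := by
  have hn0 : (0:ℝ) < (Fintype.card X : ℝ) := by
    have : (0:ℕ) < Fintype.card X := by omega
    exact_mod_cast this
  set φout : EuclideanSpace ℂ (Fin m → X) :=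
    WithLp.toLp 2 (fun x => if x ∈ Upsilon m X β then 0 else φ x) with hout
  set φin : EuclideanSpace ℂ (Fin m → X) := φ - φout with hin
  have hin0 : ∀ x, x ∉ Upsilon m X β → φin x = 0 := by
    intro x hx
    have h1 : φin x = φ x - φout x := by simp [hin]
    have h2 : φout x = φ x := by simp only [hout]; rw [if_neg hx]
    rw [h1, h2, sub_self]
  have hCin := hagree φin hin0
  have hsum : φin + φout = φ := sub_add_cancel φ φout
  have hdiff : C φ - C' φ = C φout - C' φout := by
    rw [← hsum, map_add, map_add, hCin]
    abel
  have h2 : ‖C φout - C' φout‖ ≤ 2 * ‖φout‖ := by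
    calc ‖C φout - C' φout‖ ≤ ‖C φout‖ + ‖C' φout‖ := norm_sub_le _ _
      _ = 2 * ‖φout‖ := by rw [C.norm_map, C'.norm_map]; ring
  have h3 : ‖φout‖ ^ 2 ≤
      ((Fintype.card X : ℝ) * Real.exp (-(2 * m) / (9 * Fintype.card X))) * ‖φ‖ ^ 2 := by
    rw [norm_sq_eq]
    have hpt : ∀ x, ‖φout x‖ ^ 2 = (if x ∉ Upsilon m X β then ‖φ x‖ ^ 2 else 0) := by
      intro x
      by_cases hx : x ∈ Upsilon m X β <;> simp [hout, hx]
    rw [Finset.sum_congr rfl fun x _ => hpt x]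
    exact proj_bound A1 hne hhalf β hβlow hn hsub φ hφ
  have hε : (0:ℝ) ≤ (Fintype.card X : ℝ) * Real.exp (-(2 * m) / (9 * Fintype.card X)) := by
    positivity
  have h4 : ‖φout‖ ≤ Real.sqrt
      (((Fintype.card X : ℝ) * Real.exp (-(2 * m) / (9 * Fintype.card X))) * ‖φ‖ ^ 2) := by
    rw [← Real.sqrt_sq (norm_nonneg φout)]
    exact Real.sqrt_le_sqrt h3
  have h5 : Real.sqrt
      (((Fintype.card X : ℝ) * Real.exp (-(2 * m) / (9 * Fintype.card X))) * ‖φ‖ ^ 2) =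
      (Real.sqrt (Fintype.card X) * Real.exp (-(m : ℝ) / (9 * Fintype.card X))) * ‖φ‖ := by
    rw [Real.sqrt_mul hε, Real.sqrt_sq (norm_nonneg φ),
      Real.sqrt_mul (by positivity : (0:ℝ) ≤ (Fintype.card X : ℝ)), ← Real.exp_half]
    congr 2
    ring
  rw [hdiff]
  calc ‖C φout - C' φout‖ ≤ 2 * ‖φout‖ := h2
    _ ≤ 2 * ((Real.sqrt (Fintype.card X) * Real.exp (-(m : ℝ) / (9 * Fintype.card X))) * ‖φ‖) := by
        rw [← h5]; linarith
    _ = 2 * (Real.sqrt (Fintype.card X) * Real.exp (-(m : ℝ) / (9 * Fintype.card X))) * ‖φ‖ := by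
        ring

lemma numeric_bound {m : ℕ} (hm : 2 ≤ m) (n : ℕ) (hn : 2 ≤ n)
    (hXm : (n : ℝ) < m / (36 * Real.log m)) :
    Real.sqrt n * Real.exp (-(m : ℝ) / (9 * n)) ≤ ((m : ℝ) ^ 3)⁻¹ := by
  have hm1 : (1:ℝ) < (m:ℝ) := by exact_mod_cast (by omega : 1 < m)
  have hn0 : (0:ℝ) < (n:ℝ) := by exact_mod_cast (by omega : 0 < n)
  have hlog : 0 < Real.log m := Real.log_pos hm1
  have hlog2 : Real.log 2 ≤ Real.log m := Real.log_le_log (by norm_num) (by exact_mod_cast hm)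
  have h36 : (1:ℝ) ≤ 36 * Real.log m := by nlinarith [Real.log_two_gt_d9]
  have hnm : (n : ℝ) ≤ (m:ℝ) := hXm.le.trans (div_le_self (by positivity) h36)
  have hkey : 4 * Real.log m ≤ (m:ℝ) / (9 * n) := by
    have h1 : (n:ℝ) * (36 * Real.log m) < m := (lt_div_iff₀ (by positivity)).1 hXm
    rw [le_div_iff₀ (by positivity)]
    nlinarith
  have hexp : Real.exp (-(m:ℝ) / (9 * n)) ≤ ((m:ℝ)^4)⁻¹ := by
    have h2 : Real.exp (-(m:ℝ) / (9 * n)) ≤ Real.exp (-(4 * Real.log m)) := by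
      apply Real.exp_le_exp.2
      have : -(m:ℝ) / (9 * n) = -((m:ℝ) / (9 * n)) := by ring
      rw [this]
      linarith
    have h3 : Real.exp (-(4 * Real.log m)) = ((m:ℝ)^4)⁻¹ := by
      rw [Real.exp_neg]
      congr 1
      rw [show (4:ℝ) * Real.log m = ((4:ℕ):ℝ) * Real.log m by norm_num, Real.exp_nat_mul,
        Real.exp_log (by linarith)]
    linarith
  have hsqrt : Real.sqrt n ≤ (m:ℝ) := by
    rw [show (m:ℝ) = Real.sqrt ((m:ℝ)^2) from (Real.sqrt_sq (by positivity)).symm]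
    exact Real.sqrt_le_sqrt (by nlinarith)
  calc Real.sqrt n * Real.exp (-(m : ℝ) / (9 * n)) ≤ (m:ℝ) * ((m:ℝ)^4)⁻¹ :=
        mul_le_mul hsqrt hexp (Real.exp_nonneg _) (by positivity)
    _ = ((m:ℝ)^3)⁻¹ := by
        rw [show (m:ℝ)^4 = (m:ℝ) * (m:ℝ)^3 by ring, mul_inv]
        rw [← mul_assoc, mul_inv_cancel₀ (by positivity), one_mul]

lemma norm_Phi0 (hn : 0 < Fintype.card X) : ‖Phi0 X m‖ = 1 := by
  have hn0 : (0:ℝ) < (Fintype.card X : ℝ) := by exact_mod_cast hn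
  have h2 : ‖Phi0 X m‖ ^ 2 = 1 := by
    rw [norm_sq_eq]
    have hpt : ∀ x : Fin m → X, ‖(Phi0 X m) x‖ ^ 2 = ((Fintype.card X : ℝ) ^ m)⁻¹ := by
      intro x
      simp only [Phi0, PiLp.toLp_apply]
      rw [Complex.norm_real, Real.norm_eq_abs, sq_abs, inv_pow,
        Real.sq_sqrt (by positivity)]
    rw [Finset.sum_congr rfl fun x _ => hpt x, Finset.sum_const, Finset.card_univ,
      Fintype.card_fun, Fintype.card_fin, nsmul_eq_mul]
    push_cast
    rw [mul_inv_cancel₀ (by positivity)]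
  rw [← Real.sqrt_one, ← h2, Real.sqrt_sq (norm_nonneg _)]

end Aux

theorem stmt8 {X : Type*} [Fintype X] [DecidableEq X] {m : ℕ} (hm : 2 ≤ m)
    (A1 : Fin m → Finset X) (hne : ∀ i, (A1 i).Nonempty)
    (hhalf : ∀ i, 2 * (A1 i).card ≤ Fintype.card X)
    (β : ℝ) (hβ : 8 * m / (Fintype.card X : ℝ) < β)
    (hsub : ∀ x : Fin m → X, (∀ i, x i ∈ A1 i) → x ∈ Upsilon m X (β / 2))
    (hXm : (Fintype.card X : ℝ) < m / (36 * Real.log m))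
    (C C' U : EuclideanSpace ℂ (Fin m → X) ≃ₗᵢ[ℂ] EuclideanSpace ℂ (Fin m → X))
    (hagree : ∀ φ : EuclideanSpace ℂ (Fin m → X),
      (∀ x, x ∉ Upsilon m X β → φ x = 0) → C φ = C' φ)
    (hH : ∀ φ ∈ Submodule.span ℂ (Set.range (psiState A1)),
      U (C φ) ∈ Submodule.span ℂ (Set.range (psiState A1)))
    (hΦ0 : Phi0 X m ∈ Submodule.span ℂ (Set.range (psiState A1))) :
    ∀ k : ℕ,
      ‖(fun φ => U (C φ))^[k] (Phi0 X m) - (fun φ => U (C' φ))^[k] (Phi0 X m)‖ ≤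
          2 * k * Real.sqrt (Fintype.card X) * Real.exp (-m / (9 * Fintype.card X)) ∧
        2 * k * Real.sqrt (Fintype.card X) * Real.exp (-m / (9 * Fintype.card X)) ≤
          2 * k / m ^ 3 := by
  intro k
  have i0 : Fin m := ⟨0, by omega⟩
  have hn : 2 ≤ Fintype.card X := by
    have h1 : 1 ≤ (A1 i0).card := Finset.card_pos.2 (hne i0)
    have h2 := hhalf i0
    omega
  have hn0 : (0:ℝ) < (Fintype.card X : ℝ) := by exact_mod_cast (by omega : 0 < Fintype.card X)
  have hδ0 : (0:ℝ) ≤ Real.sqrt (Fintype.card X) * Real.exp (-(m:ℝ) / (9 * Fintype.card X)) := by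
    positivity
  have hPhi : ‖Phi0 X m‖ = 1 := norm_Phi0 (by omega)
  have hmem : ∀ j : ℕ,
      (fun φ => U (C φ))^[j] (Phi0 X m) ∈ Submodule.span ℂ (Set.range (psiState A1)) := by
    intro j
    induction j with
    | zero => simpa using hΦ0
    | succ j ihj => simp only [Function.iterate_succ_apply']; exact hH _ ihj
  have hnrm : ∀ j : ℕ, ‖(fun φ => U (C φ))^[j] (Phi0 X m)‖ = 1 := by
    intro j
    induction j with
    | zero => simpa using hPhi
    | succ j ihj =>
      simp only [Function.iterate_succ_apply']
      rw [LinearIsometryEquiv.norm_map, LinearIsometryEquiv.norm_map]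
      exact ihj
  constructor
  · induction k with
    | zero => simp
    | succ k ih =>
      simp only [Function.iterate_succ_apply']
      set ξ := (fun φ => U (C φ))^[k] (Phi0 X m) with hξ
      set ξ' := (fun φ => U (C' φ))^[k] (Phi0 X m) with hξ'
      have t1 : ‖U (C ξ) - U (C' ξ)‖ ≤
          2 * (Real.sqrt (Fintype.card X) * Real.exp (-(m:ℝ) / (9 * Fintype.card X))) := by
        rw [← map_sub, LinearIsometryEquiv.norm_map]
        have hd := diff_bound A1 hne hhalf β hβ hn hsub C C' hagree ξ (hmem k)
        rw [hnrm k, mul_one] at hd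
        exact hd
      have t2 : ‖U (C' ξ) - U (C' ξ')‖ = ‖ξ - ξ'‖ := by
        rw [← map_sub, LinearIsometryEquiv.norm_map, ← map_sub, LinearIsometryEquiv.norm_map]
      calc ‖U (C ξ) - U (C' ξ')‖
          ≤ ‖U (C ξ) - U (C' ξ)‖ + ‖U (C' ξ) - U (C' ξ')‖ :=
            norm_sub_le_norm_sub_add_norm_sub _ _ _
        _ ≤ 2 * (Real.sqrt (Fintype.card X) * Real.exp (-(m:ℝ) / (9 * Fintype.card X))) +
            2 * k * Real.sqrt (Fintype.card X) * Real.exp (-(m:ℝ) / (9 * Fintype.card X)) := by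
            rw [t2]
            exact add_le_add t1 ih
        _ = 2 * (k + 1 : ℕ) * Real.sqrt (Fintype.card X) *
            Real.exp (-(m:ℝ) / (9 * Fintype.card X)) := by
            push_cast
            ring
  · have hnum := numeric_bound hm (Fintype.card X) hn hXm
    have hk0 : (0:ℝ) ≤ 2 * (k:ℝ) := by positivity
    calc 2 * (k:ℝ) * Real.sqrt (Fintype.card X) * Real.exp (-(m:ℝ) / (9 * Fintype.card X))
        = 2 * (k:ℝ) * (Real.sqrt (Fintype.card X) * Real.exp (-(m:ℝ) / (9 * Fintype.card X))) := by
          ring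
      _ ≤ 2 * (k:ℝ) * ((m:ℝ) ^ 3)⁻¹ := mul_le_mul_of_nonneg_left hnum hk0
      _ = 2 * (k:ℝ) / (m:ℝ) ^ 3 := by rw [div_eq_mul_inv]
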